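/- Let N ≥ 1, T > 0, and let S_N = {t ∈ ℝ^N : 0 ≤ t_1 ≤ t_2 ≤ ⋯ ≤ t_N ≤ T} be the ordered simplex. Let w : ℝ^N → ℝ be measurable with w(t) > 0 for Lebesgue-almost every t ∈ S_N, and for each n ∈ {1,…,N} let h_n : ℝ^N → ℝ be measurable, nonnegative, and satisfy h_n(t) > 0 for Lebesgue-almost every t ∈ S_N. Let g₁, g₂ : ℝ → ℝ be continuous on [0,T]. If ∫_{S_N} w(t)·∑_{n=1}^N (g₁(t_n) − g₂(t_n))²·h_n(t) dt = 0 (as an integral of a nonnegative function, possibly infinite), then g₁(x) = g₂(x) for every x ∈ [0,T]. -/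

import Mathlib

open MeasureTheory Real Set

def ordSimplex (N : ℕ) (T : ℝ) : Set (Fin N → ℝ) :=
  {t | Monotone t ∧ ∀ i, t i ∈ Set.Icc 0 T}

theorem stmt_8 (M : ℕ) (T : ℝ) (hT : 0 < T)
    (w : (Fin (M + 1) → ℝ) → ℝ) (hwmeas : Measurable w)
    (hwpos : ∀ᵐ t ∂(volume.restrict (ordSimplex (M + 1) T)), 0 < w t)
    (h : Fin (M + 1) → (Fin (M + 1) → ℝ) → ℝ)
    (hhmeas : ∀ n, Measurable (h n))
    (hhnn : ∀ n t, 0 ≤ h n t)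
    (hhpos : ∀ n, ∀ᵐ t ∂(volume.restrict (ordSimplex (M + 1) T)), 0 < h n t)
    (g₁ g₂ : ℝ → ℝ)
    (hg₁ : ContinuousOn g₁ (Set.Icc 0 T)) (hg₂ : ContinuousOn g₂ (Set.Icc 0 T))
    (hzero : ∫⁻ t in ordSimplex (M + 1) T,
        ENNReal.ofReal (w t * ∑ n : Fin (M + 1), (g₁ (t n) - g₂ (t n))^2 * h n t) = 0) :
    ∀ x ∈ Set.Icc 0 T, g₁ x = g₂ x := by
  intro x₀ hx₀
  by_contra hne
  have hfx₀ : g₁ x₀ - g₂ x₀ ≠ 0 := sub_ne_zero.mpr hne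
  have hp : 0 < (g₁ x₀ - g₂ x₀)^2 := by
    rcases hfx₀.lt_or_gt with h'|h' <;> nlinarith
  obtain ⟨c, hc, hclt⟩ : ∃ c, 0 < c ∧ c < (g₁ x₀ - g₂ x₀)^2 :=
    ⟨(g₁ x₀ - g₂ x₀)^2 / 2, half_pos hp, half_lt_self hp⟩
  have hfc : ContinuousOn (fun x => (g₁ x - g₂ x)^2) (Set.Icc 0 T) := (hg₁.sub hg₂).pow 2
  have hev : ∀ᶠ y in nhdsWithin x₀ (Set.Icc 0 T), c < (g₁ y - g₂ y)^2 :=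
    (hfc x₀ hx₀).eventually (eventually_gt_nhds hclt)
  obtain ⟨ε, hε, hball⟩ := Metric.mem_nhdsWithin_iff.mp hev
  obtain ⟨a, b, ha0, hbT, hab, hdista, hdistb⟩ :
      ∃ a b : ℝ, 0 ≤ a ∧ b ≤ T ∧ a < b ∧ x₀ - ε/2 ≤ a ∧ b ≤ x₀ + ε/2 := by
    refine ⟨max 0 (x₀ - ε/2), min T (x₀ + ε/2), le_max_left _ _, min_le_left _ _, ?_,
      le_max_right _ _, min_le_right _ _⟩
    apply max_lt
    · exact lt_min hT (by linarith [hx₀.1])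
    · exact lt_min (by linarith [hx₀.2]) (by linarith)
  have hkey : ∀ y ∈ Set.Icc a b, c < (g₁ y - g₂ y)^2 := by
    intro y hy
    apply hball
    refine ⟨?_, ha0.trans hy.1, hy.2.trans hbT⟩
    rw [Metric.mem_ball, Real.dist_eq, abs_lt]
    constructor <;> [linarith [hy.1]; linarith [hy.2]]
  obtain ⟨δ, hδ, hδeq⟩ : ∃ δ : ℝ, 0 < δ ∧ ((M:ℝ) + 1) * δ = b - a := by
    refine ⟨(b - a) / ((M:ℝ) + 1), div_pos (by linarith) (by positivity), ?_⟩
    field_simp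
  set B : Set (Fin (M+1) → ℝ) :=
    Set.univ.pi (fun i : Fin (M+1) => Set.Icc (a + (i:ℕ)*δ) (a + ((i:ℕ)+1)*δ)) with hBdef
  have hBmeas : MeasurableSet B := MeasurableSet.univ_pi fun i => measurableSet_Icc
  have hmem : ∀ t ∈ B, ∀ i : Fin (M+1),
      a + (i:ℕ)*δ ≤ t i ∧ t i ≤ a + ((i:ℕ)+1)*δ := fun t ht i => ht i (Set.mem_univ i)
  have hupper : ∀ i : Fin (M+1), a + ((i:ℕ)+1)*δ ≤ b := by
    intro i
    have hi : ((i:ℕ):ℝ) + 1 ≤ (M:ℝ) + 1 := by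
      have := i.isLt
      exact_mod_cast Nat.succ_le_of_lt this
    nlinarith [mul_le_mul_of_nonneg_right hi hδ.le]
  have hBS : B ⊆ ordSimplex (M+1) T := by
    intro t ht
    refine ⟨?_, ?_⟩
    · intro i j hij
      rcases eq_or_lt_of_le hij with rfl | hlt
      · exact le_rfl
      · have h1 := (hmem t ht i).2
        have h2 := (hmem t ht j).1
        have hn : (i:ℕ) < (j:ℕ) := hlt
        have hc' : ((i:ℕ):ℝ) + 1 ≤ ((j:ℕ):ℝ) := by exact_mod_cast Nat.succ_le_of_lt hn
        nlinarith [mul_le_mul_of_nonneg_right hc' hδ.le]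
    · intro i
      have h1 := (hmem t ht i).1
      have h2 := (hmem t ht i).2
      have h3 := hupper i
      have h4 : (0:ℝ) ≤ ((i:ℕ):ℝ) * δ := by positivity
      exact ⟨by linarith, by linarith⟩
  have ht0 : ∀ t ∈ B, c < (g₁ (t 0) - g₂ (t 0))^2 := by
    intro t ht
    apply hkey
    have h1 := (hmem t ht 0).1
    have h2 := (hmem t ht 0).2
    have h3 := hupper 0
    simp only [Fin.val_zero, Nat.cast_zero, zero_mul, add_zero, zero_add, one_mul] at h1 h2 h3
    exact ⟨h1, h2.trans h3⟩
  have h1 : ∫⁻ t in B,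
      ENNReal.ofReal (w t * ∑ n : Fin (M + 1), (g₁ (t n) - g₂ (t n))^2 * h n t) = 0 :=
    le_antisymm (hzero ▸ lintegral_mono_set hBS) zero_le
  have hwB : ∀ᵐ t ∂(volume.restrict B), 0 < w t :=
    ae_restrict_of_ae_restrict_of_subset hBS hwpos
  have hhB : ∀ᵐ t ∂(volume.restrict B), 0 < h 0 t :=
    ae_restrict_of_ae_restrict_of_subset hBS (hhpos 0)
  have hmemB : ∀ᵐ t ∂(volume.restrict B), t ∈ B := ae_restrict_mem hBmeas
  have h2 : ∫⁻ t in B, ENNReal.ofReal (c * (w t * h 0 t)) = 0 := by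
    refine le_antisymm (le_trans (lintegral_mono_ae ?_) h1.le) zero_le
    filter_upwards [hwB, hmemB] with t hw ht
    apply ENNReal.ofReal_le_ofReal
    have hsum : (g₁ (t 0) - g₂ (t 0))^2 * h 0 t ≤
        ∑ n : Fin (M + 1), (g₁ (t n) - g₂ (t n))^2 * h n t :=
      Finset.single_le_sum (f := fun n => (g₁ (t n) - g₂ (t n))^2 * h n t)
        (fun n _ => mul_nonneg (sq_nonneg _) (hhnn n t)) (Finset.mem_univ 0)
    have hf0 : c ≤ (g₁ (t 0) - g₂ (t 0))^2 := (ht0 t ht).le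
    have hh0 : 0 ≤ h 0 t := hhnn 0 t
    have hm : c * h 0 t ≤ (g₁ (t 0) - g₂ (t 0))^2 * h 0 t := mul_le_mul_of_nonneg_right hf0 hh0
    nlinarith [mul_le_mul_of_nonneg_left hm hw.le, mul_le_mul_of_nonneg_left hsum hw.le]
  have hGmeas : Measurable (fun t => ENNReal.ofReal (c * (w t * h 0 t))) :=
    ENNReal.measurable_ofReal.comp ((hwmeas.mul (hhmeas 0)).const_mul c)
  have h3 := (lintegral_eq_zero_iff hGmeas).mp h2
  have hFalse : ∀ᵐ t ∂(volume.restrict B), False := by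
    filter_upwards [h3, hwB, hhB] with t h3t hw hh
    simp only [Pi.zero_apply, ENNReal.ofReal_eq_zero] at h3t
    nlinarith [mul_pos hc (mul_pos hw hh)]
  have hB0 : volume.restrict B = 0 :=
    ae_eq_bot.mp (Filter.eventually_false_iff_eq_bot.mp hFalse)
  have hBvol : volume B = 0 := by
    have := congrArg (fun μ : Measure _ => μ B) hB0
    simpa [Measure.restrict_apply_self] using this
  have hBvol' : volume B = ENNReal.ofReal δ ^ (M+1) := by
    rw [hBdef, volume_pi_pi]
    have heq : ∀ i : Fin (M+1),
        volume (Set.Icc (a + (i:ℕ)*δ) (a + ((i:ℕ)+1)*δ)) = ENNReal.ofReal δ := by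
      intro i
      rw [Real.volume_Icc]
      ring_nf
    simp [heq, Finset.prod_const]
  rw [hBvol'] at hBvol
  have hne0 : ENNReal.ofReal δ ≠ 0 := by
    simp [ENNReal.ofReal_eq_zero, not_le, hδ]
  exact hne0 (pow_eq_zero_iff (by omega) |>.mp hBvol)
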